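/- Let A and B be unital rings that are Morita equivalent. Then there exist n ≥ 1 and an idempotent matrix e ∈ Mₙ(A) (e·e = e) such that the two-sided ideal of A generated by the entries of e is all of A and such that B is isomorphic as a ring to the corner ring e·Mₙ(A)·e. -/

import Mathlib

/-! Infrastructure: the corner ring `eRe` of an idempotent `e` in a unital ring `R`,
realized as the subtype `{x : R // e * x * e = x}` with the multiplication of `R`
and unit `e`. -/

section Corner

variable {R : Type*} [Ring R]

theorem corner_absorb_left {e x : R} (he : e * e = e) (hx : e * x * e = x) :
    e * x = x := by
  conv_lhs => rw [← hx]
  simp only [← mul_assoc, he]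
  exact hx

theorem corner_absorb_right {e x : R} (he : e * e = e) (hx : e * x * e = x) :
    x * e = x := by
  conv_lhs => rw [← hx]
  simp only [mul_assoc, he]
  rw [← mul_assoc]
  exact hx

/-- The corner ring `eRe` of an idempotent `e`. -/
def cornerRing {e : R} (he : e * e = e) : Ring {x : R // e * x * e = x} where
  add x y := ⟨x.1 + y.1, by rw [mul_add, add_mul, x.2, y.2]⟩
  zero := ⟨0, by simp⟩
  neg x := ⟨-x.1, by simp [x.2]⟩
  mul x y := ⟨x.1 * y.1, by
    have hx := corner_absorb_left he x.2
    have hy := corner_absorb_right he y.2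
    calc e * (x.1 * y.1) * e = (e * x.1) * (y.1 * e) := by
          simp only [mul_assoc]
      _ = x.1 * y.1 := by rw [hx, hy]⟩
  one := ⟨e, by rw [he, he]⟩
  add_assoc a b c := Subtype.ext (add_assoc a.1 b.1 c.1)
  zero_add a := Subtype.ext (zero_add a.1)
  add_zero a := Subtype.ext (add_zero a.1)
  add_comm a b := Subtype.ext (add_comm a.1 b.1)
  neg_add_cancel a := Subtype.ext (neg_add_cancel a.1)
  left_distrib a b c := Subtype.ext (left_distrib a.1 b.1 c.1)
  right_distrib a b c := Subtype.ext (right_distrib a.1 b.1 c.1)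
  zero_mul a := Subtype.ext (zero_mul a.1)
  mul_zero a := Subtype.ext (mul_zero a.1)
  mul_assoc a b c := Subtype.ext (mul_assoc a.1 b.1 c.1)
  one_mul a := Subtype.ext (corner_absorb_left he a.2)
  mul_one a := Subtype.ext (corner_absorb_right he a.2)
  nsmul n x := ⟨n • x.1, by rw [mul_smul_comm, smul_mul_assoc, x.2]⟩
  nsmul_zero x := Subtype.ext (zero_nsmul x.1)
  nsmul_succ n x := Subtype.ext (succ_nsmul x.1 n)
  zsmul n x := ⟨n • x.1, by rw [mul_smul_comm, smul_mul_assoc, x.2]⟩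
  zsmul_zero' x := Subtype.ext (zero_zsmul x.1)
  zsmul_succ' n x := Subtype.ext (by push_cast; exact add_one_zsmul x.1 (n : ℤ))
  zsmul_neg' n x := Subtype.ext (by change _ • x.1 = -(_ • x.1); simp [negSucc_zsmul]; noncomm_ring)

end Corner

universe u

open MulOpposite CategoryTheory CategoryTheory.Limits

section MatrixEnd

variable {A : Type*} [Ring A] {n : ℕ}

/-- The matrix of an `Aᵐᵒᵖ`-linear endomorphism of `Fin n → Aᵐᵒᵖ`. -/
def toMat (φ : (Fin n → Aᵐᵒᵖ) →ₗ[Aᵐᵒᵖ] (Fin n → Aᵐᵒᵖ)) : Matrix (Fin n) (Fin n) A :=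
  fun i j => (φ (Pi.single j 1) i).unop

lemma toMat_apply (φ : (Fin n → Aᵐᵒᵖ) →ₗ[Aᵐᵒᵖ] (Fin n → Aᵐᵒᵖ)) (i j : Fin n) :
    toMat φ i j = (φ (Pi.single j 1) i).unop := rfl

lemma pi_eq_sum_single (x : Fin n → Aᵐᵒᵖ) :
    x = ∑ i, x i • (Pi.single i (1 : Aᵐᵒᵖ) : Fin n → Aᵐᵒᵖ) := by
  have h : ∀ i : Fin n, x i • (Pi.single i (1 : Aᵐᵒᵖ) : Fin n → Aᵐᵒᵖ)
      = (Pi.single i (x i) : Fin n → Aᵐᵒᵖ) := by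
    intro i
    rw [← Pi.single_smul, smul_eq_mul, mul_one]
  simp_rw [h, Finset.univ_sum_single]

lemma linear_apply_eq_sum (φ : (Fin n → Aᵐᵒᵖ) →ₗ[Aᵐᵒᵖ] (Fin n → Aᵐᵒᵖ))
    (x : Fin n → Aᵐᵒᵖ) : φ x = ∑ k, x k • φ (Pi.single k 1) := by
  conv_lhs => rw [pi_eq_sum_single x, map_sum]
  simp_rw [map_smul]

lemma toMat_comp (φ ψ : (Fin n → Aᵐᵒᵖ) →ₗ[Aᵐᵒᵖ] (Fin n → Aᵐᵒᵖ)) :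
    toMat (φ ∘ₗ ψ) = toMat φ * toMat ψ := by
  funext i j
  rw [Matrix.mul_apply, toMat_apply, LinearMap.comp_apply,
    linear_apply_eq_sum φ (ψ (Pi.single j 1))]
  rw [Finset.sum_apply]
  simp only [Pi.smul_apply, smul_eq_mul, Finset.unop_sum, unop_mul]
  rfl

/-- The linear endomorphism of a matrix. -/
def ofMat (m : Matrix (Fin n) (Fin n) A) :
    (Fin n → Aᵐᵒᵖ) →ₗ[Aᵐᵒᵖ] (Fin n → Aᵐᵒᵖ) where
  toFun x := fun i => ∑ j, x j * op (m i j)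
  map_add' x y := by
    funext i
    simp [add_mul, Finset.sum_add_distrib]
  map_smul' r x := by
    funext i
    simp [Finset.mul_sum, mul_assoc]

lemma ofMat_apply (m : Matrix (Fin n) (Fin n) A) (x : Fin n → Aᵐᵒᵖ) (i : Fin n) :
    ofMat m x i = ∑ j, x j * op (m i j) := rfl

lemma toMat_ofMat (m : Matrix (Fin n) (Fin n) A) : toMat (ofMat m) = m := by
  funext i j
  rw [toMat_apply, ofMat_apply]
  simp [Pi.single_apply, ite_mul]

lemma ofMat_toMat (φ : (Fin n → Aᵐᵒᵖ) →ₗ[Aᵐᵒᵖ] (Fin n → Aᵐᵒᵖ)) : ofMat (toMat φ) = φ := by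
  refine LinearMap.ext fun x => funext fun i => ?_
  rw [ofMat_apply, linear_apply_eq_sum φ x, Finset.sum_apply]
  simp only [Pi.smul_apply, smul_eq_mul, toMat_apply, op_unop]

lemma toMat_add (φ ψ : (Fin n → Aᵐᵒᵖ) →ₗ[Aᵐᵒᵖ] (Fin n → Aᵐᵒᵖ)) :
    toMat (φ + ψ) = toMat φ + toMat ψ := by
  funext i j
  simp [toMat_apply]

end MatrixEnd

section Transfer

variable {R S : Type u} [Ring R] [Ring S]
variable (E : ModuleCat.{u} R ≌ ModuleCat.{u} S) [E.functor.Additive]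

/-- If every morphism from the image of `R` under an equivalence to `M` vanishes,
then `M` is trivial. -/
lemma subsingleton_of_hom_zero (M : ModuleCat.{u} S)
    (h : ∀ f : E.functor.obj (ModuleCat.of R R) ⟶ M, f = 0) :
    Subsingleton M := by
  -- every element of `E.inverse.obj M` is zero
  have hz : ∀ x : E.inverse.obj M, x = 0 := by
    intro x
    have h0 : ∀ f : ModuleCat.of R R ⟶ E.inverse.obj M, f = 0 := by
      intro f
      have h1 : E.functor.map f ≫ E.counit.app M = 0 := h _
      have h2 : E.functor.map f
          = (E.functor.map f ≫ E.counit.app M) ≫ E.counitInv.app M := by simp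
      rw [h1, Limits.zero_comp, ← E.functor.map_zero] at h2
      exact E.functor.map_injective h2
    have := h0 (ModuleCat.ofHom (LinearMap.toSpanSingleton R _ x))
    calc x = (LinearMap.toSpanSingleton R (E.inverse.obj M) x) 1 := by
            simp [LinearMap.toSpanSingleton_apply]
      _ = (ModuleCat.ofHom (LinearMap.toSpanSingleton R (E.inverse.obj M) x)) 1 := rfl
      _ = 0 := by rw [this]; rfl
  have hid : 𝟙 (E.inverse.obj M) = (0 : E.inverse.obj M ⟶ E.inverse.obj M) := by
    ext x
    simp [hz x]
  have hM : 𝟙 M = (0 : M ⟶ M) := by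
    have : 𝟙 M = E.counitInv.app M ≫ E.functor.map (𝟙 (E.inverse.obj M)) ≫ E.counit.app M := by
      simp
    rw [hid, E.functor.map_zero, Limits.zero_comp, Limits.comp_zero] at this
    exact this
  have hz' : ∀ z : M, z = 0 := by
    intro z
    have h3 : (𝟙 M : M ⟶ M) z = (0 : M ⟶ M) z := by rw [hM]
    exact h3
  exact ⟨fun a b => by rw [hz' a, hz' b]⟩

/-- The trace of the image of `R` under an additive equivalence is all of `S`:
there are finitely many functionals and elements with `∑ fs k (qs k) = 1`. -/
lemma exists_trace_one :
    ∃ (m : ℕ) (fs : Fin m → (E.functor.obj (ModuleCat.of R R) ⟶ ModuleCat.of S S))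
      (qs : Fin m → E.functor.obj (ModuleCat.of R R)),
      ∑ k, fs k (qs k) = (1 : S) := by
  set Z := E.functor.obj (ModuleCat.of R R) with hZ
  -- Z is a projective module
  have hproj : Projective Z := by
    have h1 : Projective (ModuleCat.of R R) :=
      (IsProjective.iff_projective R).mp inferInstance
    exact (E.map_projective_iff (ModuleCat.of R R)).mpr h1
  have hmod : Module.Projective S Z := by
    rw [IsProjective.iff_projective]
    exact hproj
  -- the trace submodule
  set τ : Submodule S S := ⨆ f : Z →ₗ[S] S, LinearMap.range f with hτ
  have htop : τ = ⊤ := by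
    rw [← Submodule.Quotient.subsingleton_iff]
    have : Subsingleton (ModuleCat.of S (S ⧸ τ)) := by
      refine subsingleton_of_hom_zero E _ (fun f => ?_)
      obtain ⟨g, hg⟩ := Module.projective_lifting_property τ.mkQ
        f.hom (Submodule.Quotient.mk_surjective τ)
      have : ∀ x, f x = 0 := by
        intro x
        have h1 : f x = τ.mkQ (g x) := by show f.hom x = _; rw [← hg]; rfl
        rw [h1, Submodule.mkQ_apply, Submodule.Quotient.mk_eq_zero]
        exact (le_iSup (fun f : Z →ₗ[S] S => LinearMap.range f) g) ⟨x, rfl⟩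
      ext x
      rw [this x]
      rfl
    exact this
  -- 1 lies in the span of the values
  have h1 : (1 : S) ∈ Submodule.span S {x : S | ∃ (f : Z →ₗ[S] S) (q : Z), f q = x} := by
    have hle : τ ≤ Submodule.span S {x : S | ∃ (f : Z →ₗ[S] S) (q : Z), f q = x} := by
      refine iSup_le fun f => ?_
      rintro _ ⟨q, rfl⟩
      exact Submodule.subset_span ⟨f, q, rfl⟩
    exact hle (htop ▸ Submodule.mem_top)
  rw [Submodule.mem_span_set'] at h1
  obtain ⟨m, c, g, hsum⟩ := h1
  choose f' q' hfq using fun k => (g k).2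
  refine ⟨m, fun k => ModuleCat.ofHom (f' k), fun k => c k • q' k, ?_⟩
  calc ∑ k, (f' k) (c k • q' k) = ∑ k, c k • (f' k) (q' k) := by simp
    _ = ∑ k, c k • ((g k : S)) := by simp_rw [hfq]
    _ = 1 := hsum


end Transfer

/-- If two unital rings `A` and `B` are Morita equivalent (their
categories of right modules are equivalent via an additive equivalence), then there are
`n ≥ 1` and an idempotent matrix `e ∈ Mₙ(A)` whose entries generate `A` as a two-sided
ideal, such that `B` is isomorphic as a ring to the corner ring `e Mₙ(A) e`. -/
theorem exists_full_idempotent_matrix_of_morita_equivalent (A B : Type u) [Ring A] [Ring B]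
    (F : ModuleCat.{u} Bᵐᵒᵖ ≌ ModuleCat.{u} Aᵐᵒᵖ) [F.functor.Additive] :
    ∃ (n : ℕ), 1 ≤ n ∧ ∃ (e : Matrix (Fin n) (Fin n) A) (he : e * e = e),
      TwoSidedIdeal.span {a : A | ∃ i j, e i j = a} = ⊤ ∧
      (letI : Ring {x : Matrix (Fin n) (Fin n) A // e * x * e = x} := cornerRing he
       Nonempty (B ≃+* {x : Matrix (Fin n) (Fin n) A // e * x * e = x})) := by
  classical
  haveI : F.symm.functor.Additive := inferInstanceAs F.inverse.Additive
  obtain ⟨m, fs, qs, hsum⟩ := exists_trace_one F.symm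
  set n := m + 1 with hn
  let fs' : Fin n → (F.symm.functor.obj (ModuleCat.of Aᵐᵒᵖ Aᵐᵒᵖ) ⟶ ModuleCat.of Bᵐᵒᵖ Bᵐᵒᵖ) :=
    Fin.snoc fs 0
  let qs' : Fin n → F.symm.functor.obj (ModuleCat.of Aᵐᵒᵖ Aᵐᵒᵖ) := Fin.snoc qs 0
  have hsum' : ∑ k, fs' k (qs' k) = (1 : Bᵐᵒᵖ) := by
    rw [Fin.sum_univ_castSucc]
    simp only [fs', qs', Fin.snoc_castSucc, Fin.snoc_last, LinearMap.zero_apply, hsum,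
      map_zero, add_zero]
  -- the splitting of the free module over B
  let ρ₀ : (Fin n → F.symm.functor.obj (ModuleCat.of Aᵐᵒᵖ Aᵐᵒᵖ)) →ₗ[Bᵐᵒᵖ] Bᵐᵒᵖ :=
    { toFun := fun x => ∑ k, fs' k (x k)
      map_add' := fun x y => by
        simp only [Pi.add_apply, map_add]
        rw [Finset.sum_add_distrib]
      map_smul' := fun r x => by
        simp only [Pi.smul_apply, map_smul, RingHom.id_apply]
        rw [← Finset.smul_sum] }
  let σ₀ : Bᵐᵒᵖ →ₗ[Bᵐᵒᵖ] (Fin n → F.symm.functor.obj (ModuleCat.of Aᵐᵒᵖ Aᵐᵒᵖ)) :=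
    LinearMap.toSpanSingleton Bᵐᵒᵖ _ qs'
  have hρσ₀ : ∀ b, ρ₀ (σ₀ b) = b := by
    intro b
    show ∑ k, fs' k ((b • qs') k) = b
    calc ∑ k, fs' k ((b • qs') k) = ∑ k, b • fs' k (qs' k) := by
          simp only [Pi.smul_apply, map_smul]
      _ = b • ∑ k, fs' k (qs' k) := by rw [← Finset.smul_sum]
      _ = b := by rw [hsum', smul_eq_mul, mul_one]
  let ρ : ModuleCat.of Bᵐᵒᵖ (Fin n → F.symm.functor.obj (ModuleCat.of Aᵐᵒᵖ Aᵐᵒᵖ)) ⟶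
      ModuleCat.of Bᵐᵒᵖ Bᵐᵒᵖ := ModuleCat.ofHom ρ₀
  let σ : ModuleCat.of Bᵐᵒᵖ Bᵐᵒᵖ ⟶
      ModuleCat.of Bᵐᵒᵖ (Fin n → F.symm.functor.obj (ModuleCat.of Aᵐᵒᵖ Aᵐᵒᵖ)) := ModuleCat.ofHom σ₀
  have hσρ : σ ≫ ρ = 𝟙 (ModuleCat.of Bᵐᵒᵖ Bᵐᵒᵖ) := by
    ext : 1
    exact LinearMap.ext fun b => hρσ₀ b
  -- the image of B under the equivalence
  -- isomorphism of F(Q^n) with A^n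
  let J : F.functor.obj (ModuleCat.of Bᵐᵒᵖ
        (Fin n → F.symm.functor.obj (ModuleCat.of Aᵐᵒᵖ Aᵐᵒᵖ))) ≅
      ModuleCat.of Aᵐᵒᵖ (Fin n → Aᵐᵒᵖ) :=
    F.functor.mapIso (ModuleCat.biproductIsoPi
        (fun _ : Fin n => F.symm.functor.obj (ModuleCat.of Aᵐᵒᵖ Aᵐᵒᵖ))).symm ≪≫
      F.functor.mapBiproduct _ ≪≫
      biproduct.mapIso (fun _ : Fin n => F.counitIso.app (ModuleCat.of Aᵐᵒᵖ Aᵐᵒᵖ)) ≪≫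
      ModuleCat.biproductIsoPi (fun _ : Fin n => ModuleCat.of Aᵐᵒᵖ Aᵐᵒᵖ)
  let i : F.functor.obj (ModuleCat.of Bᵐᵒᵖ Bᵐᵒᵖ) ⟶ ModuleCat.of Aᵐᵒᵖ (Fin n → Aᵐᵒᵖ) :=
    F.functor.map σ ≫ J.hom
  let p : ModuleCat.of Aᵐᵒᵖ (Fin n → Aᵐᵒᵖ) ⟶ F.functor.obj (ModuleCat.of Bᵐᵒᵖ Bᵐᵒᵖ) :=
    J.inv ≫ F.functor.map ρ
  have hip : i ≫ p = 𝟙 (F.functor.obj (ModuleCat.of Bᵐᵒᵖ Bᵐᵒᵖ)) := by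
    show (F.functor.map σ ≫ J.hom) ≫ (J.inv ≫ F.functor.map ρ) = _
    rw [Category.assoc, Iso.hom_inv_id_assoc, ← F.functor.map_comp, hσρ, F.functor.map_id]
  -- pass to linear maps
  let ι : F.functor.obj (ModuleCat.of Bᵐᵒᵖ Bᵐᵒᵖ) →ₗ[Aᵐᵒᵖ] (Fin n → Aᵐᵒᵖ) := i.hom
  let π : (Fin n → Aᵐᵒᵖ) →ₗ[Aᵐᵒᵖ] F.functor.obj (ModuleCat.of Bᵐᵒᵖ Bᵐᵒᵖ) := p.hom
  have hπι : ∀ x, π (ι x) = x := fun x => LinearMap.congr_fun (congrArg ModuleCat.Hom.hom hip) x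
  let ε : (Fin n → Aᵐᵒᵖ) →ₗ[Aᵐᵒᵖ] (Fin n → Aᵐᵒᵖ) := ι ∘ₗ π
  have hεε : ε ∘ₗ ε = ε := LinearMap.ext fun v => by
    show ι (π (ι (π v))) = ι (π v)
    rw [hπι]
  have he : toMat ε * toMat ε = toMat ε := by rw [← toMat_comp, hεε]
  refine ⟨n, Nat.le_add_left 1 m, toMat ε, he, ?_, ?_⟩
  · -- fullness of the idempotent
    set I := TwoSidedIdeal.span {a : A | ∃ i j, toMat ε i j = a} with hI
    let N : Submodule Aᵐᵒᵖ Aᵐᵒᵖ :=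
      { carrier := {x | x.unop ∈ I}
        zero_mem' := by simpa using I.zero_mem
        add_mem' := fun hx hy => by simpa using I.add_mem hx hy
        smul_mem' := fun r x hx => by
          show (r • x).unop ∈ I
          rw [smul_eq_mul, unop_mul]
          exact I.mul_mem_right _ _ hx }
    have hsm : ∀ c : Aᵐᵒᵖ, c.unop ∈ I → ∀ z : Aᵐᵒᵖ ⧸ N, c • z = 0 := by
      intro c hc z
      obtain ⟨a, rfl⟩ := Submodule.Quotient.mk_surjective N z
      rw [← Submodule.Quotient.mk_smul, Submodule.Quotient.mk_eq_zero]
      show (c • a).unop ∈ I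
      rw [smul_eq_mul, unop_mul]
      exact I.mul_mem_left _ _ hc
    have hzero : ∀ f : F.functor.obj (ModuleCat.of Bᵐᵒᵖ Bᵐᵒᵖ) ⟶
        ModuleCat.of Aᵐᵒᵖ (Aᵐᵒᵖ ⧸ N), f = 0 := by
      intro f
      let g : (Fin n → Aᵐᵒᵖ) →ₗ[Aᵐᵒᵖ] (Aᵐᵒᵖ ⧸ N) :=
        f.hom ∘ₗ π
      have hgδ : ∀ j, g (Pi.single j 1) = 0 := by
        intro j
        have h1 : g (ε (Pi.single j 1)) = g (Pi.single j 1) := by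
          show f (π (ι (π _))) = f (π _)
          rw [hπι]
        calc g (Pi.single j 1) = g (ε (Pi.single j 1)) := h1.symm
          _ = ∑ k, ε (Pi.single j 1) k • g (Pi.single k 1) := by
              conv_lhs => rw [pi_eq_sum_single (ε (Pi.single j 1))]
              rw [map_sum]
              simp_rw [map_smul]
          _ = 0 := Finset.sum_eq_zero fun k _ =>
              hsm _ (TwoSidedIdeal.subset_span ⟨k, j, rfl⟩) _
      have hg : ∀ v, g v = 0 := by
        intro v
        conv_lhs => rw [pi_eq_sum_single v]
        rw [map_sum]
        simp_rw [map_smul, hgδ, smul_zero]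
        simp
      ext x
      have : f x = g (ι x) := by
        show f x = f (π (ι x))
        rw [hπι]
      rw [this, hg]
      rfl
    have hsub : Subsingleton (ModuleCat.of Aᵐᵒᵖ (Aᵐᵒᵖ ⧸ N)) :=
      subsingleton_of_hom_zero F _ hzero
    have hN : N = ⊤ := by
      rw [← Submodule.Quotient.subsingleton_iff]
      exact hsub
    have h1 : (1 : A) ∈ I := by
      have : (1 : Aᵐᵒᵖ) ∈ N := hN ▸ Submodule.mem_top
      exact this
    rw [eq_top_iff]
    intro x _
    have := I.mul_mem_left x 1 h1
    rwa [mul_one] at this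
  · -- the ring isomorphism
    letI : Ring {x : Matrix (Fin n) (Fin n) A // toMat ε * x * toMat ε = x} := cornerRing he
    -- B ≃+* End(P)
    let tb : B → (ModuleCat.of Bᵐᵒᵖ Bᵐᵒᵖ ⟶ ModuleCat.of Bᵐᵒᵖ Bᵐᵒᵖ) := fun b =>
      ModuleCat.ofHom (LinearMap.toSpanSingleton Bᵐᵒᵖ Bᵐᵒᵖ (op b))
    let ψ : B →+* Module.End Aᵐᵒᵖ (F.functor.obj (ModuleCat.of Bᵐᵒᵖ Bᵐᵒᵖ)) :=
      { toFun := fun b => (F.functor.map (tb b)).hom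
        map_one' := by
          have h : tb 1 = 𝟙 (ModuleCat.of Bᵐᵒᵖ Bᵐᵒᵖ) := ModuleCat.hom_ext <| LinearMap.ext fun (x : Bᵐᵒᵖ) => by
            show x • op (1 : B) = x
            rw [op_one, smul_eq_mul, mul_one]
          show (F.functor.map (tb 1)).hom = (1 : Module.End Aᵐᵒᵖ (F.functor.obj (ModuleCat.of Bᵐᵒᵖ Bᵐᵒᵖ)))
          rw [h, F.functor.map_id]
          rfl
        map_mul' := fun b₁ b₂ => by
          have h : tb (b₁ * b₂) = tb b₂ ≫ tb b₁ := ModuleCat.hom_ext <| LinearMap.ext fun (x : Bᵐᵒᵖ) => by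
            show x • op (b₁ * b₂) = (x • op b₂) • op b₁
            rw [op_mul, smul_eq_mul, smul_eq_mul, smul_eq_mul, mul_assoc]
          show (F.functor.map (tb (b₁ * b₂))).hom = _
          rw [h, F.functor.map_comp]
          rfl
        map_zero' := by
          have h : tb 0 = 0 := ModuleCat.hom_ext <| LinearMap.ext fun (x : Bᵐᵒᵖ) => by
            show x • op (0 : B) = 0
            rw [MulOpposite.op_zero, smul_zero]
          show (F.functor.map (tb 0)).hom = (0 : Module.End Aᵐᵒᵖ (F.functor.obj (ModuleCat.of Bᵐᵒᵖ Bᵐᵒᵖ)))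
          rw [h, F.functor.map_zero, ModuleCat.hom_zero]
        map_add' := fun b₁ b₂ => by
          have h : tb (b₁ + b₂) = tb b₁ + tb b₂ := ModuleCat.hom_ext <| LinearMap.ext fun (x : Bᵐᵒᵖ) => by
            show x • op (b₁ + b₂) = x • op b₁ + x • op b₂
            rw [MulOpposite.op_add, smul_add]
          show (F.functor.map (tb (b₁ + b₂))).hom = _
          rw [h, F.functor.map_add, ModuleCat.hom_add] }
    have hinj : Function.Injective ψ := by
      intro b₁ b₂ hb
      have h2 : tb b₁ = tb b₂ := F.functor.map_injective (show F.functor.map (tb b₁) = F.functor.map (tb b₂) from ModuleCat.hom_ext hb)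
      have h3 := LinearMap.congr_fun (congrArg ModuleCat.Hom.hom h2) (1 : Bᵐᵒᵖ)
      have h4 : op b₁ = op b₂ := by
        rw [← one_smul Bᵐᵒᵖ (op b₁), ← one_smul Bᵐᵒᵖ (op b₂)]
        exact h3
      exact op_injective h4
    have hsurj : Function.Surjective ψ := by
      intro φ
      let g : ModuleCat.of Bᵐᵒᵖ Bᵐᵒᵖ ⟶ ModuleCat.of Bᵐᵒᵖ Bᵐᵒᵖ :=
        F.functor.preimage (ModuleCat.ofHom φ : F.functor.obj (ModuleCat.of Bᵐᵒᵖ Bᵐᵒᵖ) ⟶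
          F.functor.obj (ModuleCat.of Bᵐᵒᵖ Bᵐᵒᵖ))
      refine ⟨unop (g (1 : Bᵐᵒᵖ)), ?_⟩
      have hg : tb (unop (g (1 : Bᵐᵒᵖ))) = g :=
        ModuleCat.hom_ext <| LinearMap.ext fun (x : Bᵐᵒᵖ) => by
          show x • op (unop (g (1 : Bᵐᵒᵖ))) = g x
          rw [op_unop]
          calc x • g (1 : Bᵐᵒᵖ) = g (x • (1 : Bᵐᵒᵖ)) := (map_smul g.hom x (1 : Bᵐᵒᵖ)).symm
            _ = g x := by rw [smul_eq_mul, mul_one]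
      show (F.functor.map _).hom = φ
      rw [hg]
      exact congrArg ModuleCat.Hom.hom (F.functor.map_preimage _)
    let equivB : B ≃+* Module.End Aᵐᵒᵖ (F.functor.obj (ModuleCat.of Bᵐᵒᵖ Bᵐᵒᵖ)) :=
      RingEquiv.ofBijective ψ ⟨hinj, hsurj⟩
    -- End(P) ≃+* corner ring
    let equivC : Module.End Aᵐᵒᵖ (F.functor.obj (ModuleCat.of Bᵐᵒᵖ Bᵐᵒᵖ)) ≃+*
        {x : Matrix (Fin n) (Fin n) A // toMat ε * x * toMat ε = x} :=
      { toFun := fun φ => ⟨toMat (ι ∘ₗ φ ∘ₗ π), by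
          have hcomp : (ε ∘ₗ (ι ∘ₗ φ ∘ₗ π)) ∘ₗ ε = ι ∘ₗ φ ∘ₗ π := LinearMap.ext fun v => by
            show ι (π (ι (φ (π (ι (π v)))))) = ι (φ (π v))
            rw [hπι, hπι]
          rw [← toMat_comp, ← toMat_comp, hcomp]⟩
        invFun := fun x => π ∘ₗ ofMat x.1 ∘ₗ ι
        left_inv := fun φ => by
          show π ∘ₗ ofMat (toMat (ι ∘ₗ φ ∘ₗ π)) ∘ₗ ι = φ
          rw [ofMat_toMat]
          refine LinearMap.ext fun x => ?_
          show π (ι (φ (π (ι x)))) = φ x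
          rw [hπι, hπι]
        right_inv := fun x => by
          refine Subtype.ext ?_
          show toMat (ι ∘ₗ (π ∘ₗ ofMat x.1 ∘ₗ ι) ∘ₗ π) = x.1
          have h : ι ∘ₗ (π ∘ₗ ofMat x.1 ∘ₗ ι) ∘ₗ π = ε ∘ₗ (ofMat x.1 ∘ₗ ε) := rfl
          rw [h, toMat_comp, toMat_comp, toMat_ofMat, ← mul_assoc]
          exact x.2
        map_mul' := fun φ φ' => by
          refine Subtype.ext ?_
          show toMat (ι ∘ₗ (φ * φ') ∘ₗ π) = toMat (ι ∘ₗ φ ∘ₗ π) * toMat (ι ∘ₗ φ' ∘ₗ π)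
          have hcomp : (ι ∘ₗ φ ∘ₗ π) ∘ₗ (ι ∘ₗ φ' ∘ₗ π) = ι ∘ₗ (φ * φ') ∘ₗ π :=
            LinearMap.ext fun v => by
              show ι (φ (π (ι (φ' (π v))))) = ι (φ (φ' (π v)))
              rw [hπι]
          rw [← toMat_comp, hcomp]
        map_add' := fun φ φ' => by
          refine Subtype.ext ?_
          show toMat (ι ∘ₗ (φ + φ') ∘ₗ π) = toMat (ι ∘ₗ φ ∘ₗ π) + toMat (ι ∘ₗ φ' ∘ₗ π)
          have hcomp : ι ∘ₗ (φ + φ') ∘ₗ π = (ι ∘ₗ φ ∘ₗ π) + (ι ∘ₗ φ' ∘ₗ π) :=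
            LinearMap.ext fun v => by
              show ι (φ (π v) + φ' (π v)) = ι (φ (π v)) + ι (φ' (π v))
              rw [map_add]
          rw [hcomp, toMat_add] }
    exact ⟨equivB.trans equivC⟩
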